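/- Let A be a randomized algorithm taking as input an n-element dataset from 𝒳^n and outputting a value in a finite set 𝒴. Then for every β > 0, A has β-approximate max-information at most log(|𝒴|/β); that is, I_∞^β(A,n) ≤ log(|𝒴|/β). -/

import Mathlib

open scoped ENNReal

/-- Probability of an event under a PMF. -/
noncomputable def pr {Z : Type*} (p : PMF Z) (O : Set Z) : ℝ≥0∞ :=
  p.toOuterMeasure O

/-- Product of two independent PMFs. -/
noncomputable def pmfPair {A B : Type*} (p : PMF A) (q : PMF B) : PMF (A × B) :=
  p.bind fun a => q.map fun b => (a, b)

/-- Joint distribution of (input, output). -/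
noncomputable def joint {A B : Type*} (μ : PMF A) (f : A → PMF B) : PMF (A × B) :=
  μ.bind fun a => (f a).map fun b => (a, b)

/-- Product of the marginals of input and output. -/
noncomputable def indepProd {A B : Type*} (μ : PMF A) (f : A → PMF B) : PMF (A × B) :=
  pmfPair μ (μ.bind f)

/-- `D_∞^δ(p ‖ q) ≤ k` (δ-approximate max-divergence, log base 2). -/
def approxDivLe {Z : Type*} (p q : PMF Z) (δ k : ℝ) : Prop :=
  ∀ O : Set Z, ENNReal.ofReal δ < pr p O →
    pr p O - ENNReal.ofReal δ ≤ (2 : ℝ≥0∞) ^ k * pr q O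

/-- `I_∞^β(S; f(S)) ≤ k` for `S ∼ μ`. -/
def approxMaxInfoLe {A B : Type*} (μ : PMF A) (f : A → PMF B) (β k : ℝ) : Prop :=
  approxDivLe (joint μ f) (indepProd μ f) β k

/-- `I_∞^β(A, n) ≤ k`: the bound holds for every distribution over datasets. -/
def algApproxMaxInfoLe {X Y : Type*} (n : ℕ) (A : (Fin n → X) → PMF Y) (β k : ℝ) : Prop :=
  ∀ μ : PMF (Fin n → X), approxMaxInfoLe μ A β k

lemma joint_apply' {A B : Type*} (μ : PMF A) (f : A → PMF B) (a : A) (b : B) :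
    joint μ f (a, b) = μ a * f a b := by
  simp only [joint, PMF.bind_apply, PMF.map_apply]
  rw [tsum_eq_single a]
  · congr 1
    rw [tsum_eq_single b]
    · simp
    · intro x hx
      simp [Prod.mk.injEq]
      intro h; exact absurd h.symm hx
  · intro x hx
    simp only [Prod.mk.injEq, mul_eq_zero]
    right
    rw [ENNReal.summable.tsum_eq_zero_iff]
    intro y
    simp only [ite_eq_right_iff]
    intro h; exact absurd (congrArg Prod.fst h).symm hx

lemma indepProd_apply' {A B : Type*} (μ : PMF A) (f : A → PMF B) (a : A) (b : B) :
    indepProd μ f (a, b) = μ a * (μ.bind f) b := by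
  have : indepProd μ f = joint μ (fun _ => μ.bind f) := rfl
  rw [this, joint_apply']

lemma pr_eq_tsum {Z : Type*} (p : PMF Z) (O : Set Z) :
    pr p O = ∑' z, O.indicator p z := by
  rw [pr, PMF.toOuterMeasure_apply]

/-- any randomized algorithm with a finite range `𝒴` has, for every
`β > 0`, β-approximate max-information at most `log₂(|𝒴| / β)`. -/
theorem approxMaxInfo_le_log_card
    {X Y : Type*} [Fintype X] [Fintype Y] {n : ℕ}
    (A : (Fin n → X) → PMF Y) (β : ℝ) (hβ : 0 < β) :
    algApproxMaxInfoLe n A β (Real.logb 2 ((Fintype.card Y : ℝ) / β)) := by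
  intro μ O _hO
  -- Y is nonempty since a PMF on it exists
  obtain ⟨x0, -⟩ := μ.support_nonempty
  obtain ⟨y0, -⟩ := (A x0).support_nonempty
  haveI : Nonempty Y := ⟨y0⟩
  set c : ℝ := (Fintype.card Y : ℝ) with hc
  have hc0 : 0 < c := by positivity
  set q : PMF Y := μ.bind A with hq
  set κ : ℝ≥0∞ := ENNReal.ofReal (c / β) with hκ
  -- rewrite the power as κ
  have hpow : (2 : ℝ≥0∞) ^ Real.logb 2 (c / β) = κ := by
    have h2 : (2 : ℝ≥0∞) = ENNReal.ofReal 2 := by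
      rw [ENNReal.ofReal_ofNat]
    rw [h2, ENNReal.ofReal_rpow_of_pos (by norm_num),
      Real.rpow_logb (by norm_num) (by norm_num) (div_pos hc0 hβ)]
  rw [hpow, tsub_le_iff_left]
  -- per-y sums
  set T : Y → ℝ≥0∞ := fun y => ∑' x, O.indicator (joint μ A) (x, y) with hT
  set S : Y → ℝ≥0∞ := fun y => ∑' x, O.indicator (indepProd μ A) (x, y) with hS
  have hprJ : pr (joint μ A) O = ∑ y, T y := by
    rw [pr_eq_tsum, ← tsum_fintype (L := SummationFilter.unconditional _), ← ENNReal.tsum_comm, ENNReal.tsum_prod']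
  have hprI : pr (indepProd μ A) O = ∑ y, S y := by
    rw [pr_eq_tsum, ← tsum_fintype (L := SummationFilter.unconditional _), ← ENNReal.tsum_comm, ENNReal.tsum_prod']
  -- key per-y bound
  have key : ∀ y : Y, T y ≤ ENNReal.ofReal (β / c) + κ * S y := by
    intro y
    by_cases hy : ENNReal.ofReal (β / c) ≤ q y
    · -- good y : T y ≤ κ * S y
      refine le_trans ?_ (le_add_left le_rfl)
      have h1 : (1 : ℝ≥0∞) ≤ κ * q y := by
        calc (1 : ℝ≥0∞) = ENNReal.ofReal ((c / β) * (β / c)) := by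
              rw [div_mul_div_comm, mul_comm c β, div_self (by positivity), ENNReal.ofReal_one]
          _ = κ * ENNReal.ofReal (β / c) := by
              rw [ENNReal.ofReal_mul (by positivity)]
          _ ≤ κ * q y := mul_le_mul_right hy κ
      rw [hT, hS, ← ENNReal.tsum_mul_left]
      refine ENNReal.tsum_le_tsum fun x => ?_
      by_cases hxy : (x, y) ∈ O
      · rw [Set.indicator_of_mem hxy, Set.indicator_of_mem hxy, joint_apply',
          indepProd_apply', ← hq]
        calc μ x * A x y ≤ μ x * 1 := mul_le_mul_right (PMF.coe_le_one _ _) _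
          _ = μ x := mul_one _
          _ = 1 * μ x := (one_mul _).symm
          _ ≤ (κ * q y) * μ x := mul_le_mul_left h1 _
          _ = κ * (μ x * q y) := by ring
      · simp [Set.indicator_of_notMem hxy]
    · -- bad y : T y ≤ q y ≤ ofReal (β / c)
      refine le_trans ?_ (le_add_right (le_of_lt (lt_of_not_ge hy)))
      have : T y ≤ ∑' x, joint μ A (x, y) :=
        ENNReal.tsum_le_tsum fun x => Set.indicator_le_self _ _ _
      refine this.trans ?_
      have : ∑' x, joint μ A (x, y) = q y := by
        simp only [joint_apply', hq, PMF.bind_apply]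
      rw [this]
  -- sum up
  calc pr (joint μ A) O = ∑ y, T y := hprJ
    _ ≤ ∑ y : Y, (ENNReal.ofReal (β / c) + κ * S y) :=
        Finset.sum_le_sum fun y _ => key y
    _ = (Fintype.card Y : ℝ≥0∞) * ENNReal.ofReal (β / c) + κ * ∑ y, S y := by
        rw [Finset.sum_add_distrib, Finset.sum_const, Finset.mul_sum, Finset.card_univ,
          nsmul_eq_mul]
    _ = ENNReal.ofReal β + κ * pr (indepProd μ A) O := by
        rw [hprI]
        congr 1
        rw [← ENNReal.ofReal_natCast, ← ENNReal.ofReal_mul (by positivity), ← hc,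
          mul_div_cancel₀ _ (ne_of_gt hc0)]
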